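/- (Barrier certificate theorem) Let f : ℝⁿ → ℝⁿ be continuous and locally Lipschitz, and consider ẋ = f(x) with solutions complete on [0,∞). Let D, X₀ ⊂ ℝⁿ and B : ℝⁿ → ℝ be continuously differentiable with: B(ξ) > 0 for all ξ ∈ D; B(ξ) < 0 for all ξ ∈ X₀; and ⟨∇B(ξ), f(ξ)⟩ ≤ -α(|ξ|_D) for all ξ with some class K function α, where |ξ|_D is the distance to D. Then for every x₀ ∈ X₀ the solution x(t) satisfies B(x(t)) < 0 for all t ≥ 0; in particular x(t) ∉ D for all t ≥ 0 (the system is safe). -/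

import Mathlib

/-- Barrier certificate theorem (strict version): if B > 0 on D, B < 0 on X₀,
and ⟨∇B(ξ), f(ξ)⟩ ≤ -α(|ξ|_D) with α of class K, then every solution starting
in X₀ satisfies B(x(t)) < 0 for all t ≥ 0, hence avoids D. -/
theorem stmt14 {n : ℕ}
    (f : EuclideanSpace ℝ (Fin n) → EuclideanSpace ℝ (Fin n))
    (hfc : Continuous f) (hf : LocallyLipschitz f)
    (D X₀ : Set (EuclideanSpace ℝ (Fin n)))
    (B : EuclideanSpace ℝ (Fin n) → ℝ) (hB : ContDiff ℝ 1 B)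
    (α : ℝ → ℝ) (hαc : ContinuousOn α (Set.Ici 0))
    (hαm : StrictMonoOn α (Set.Ici 0)) (hα0 : α 0 = 0)
    (hBD : ∀ ξ ∈ D, 0 < B ξ) (hBX0 : ∀ ξ ∈ X₀, B ξ < 0)
    (hdiss : ∀ ξ, fderiv ℝ B ξ (f ξ) ≤ -α (Metric.infDist ξ D))
    (x : ℝ → EuclideanSpace ℝ (Fin n)) (hx0 : x 0 ∈ X₀)
    (hsol : ∀ t ≥ 0, HasDerivAt x (f (x t)) t) :
    ∀ t ≥ 0, B (x t) < 0 ∧ x t ∉ D := by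
  have hg : ∀ t ≥ (0:ℝ), HasDerivAt (fun s => B (x s)) (fderiv ℝ B (x t) (f (x t))) t := by
    intro t ht
    exact ((hB.differentiable one_ne_zero).differentiableAt.hasFDerivAt).comp_hasDerivAt t (hsol t ht)
  have hα_nonneg : ∀ ξ, 0 ≤ α (Metric.infDist ξ D) := by
    intro ξ
    have hd : (0:ℝ) ≤ Metric.infDist ξ D := Metric.infDist_nonneg
    rcases eq_or_lt_of_le hd with h | h
    · rw [← h, hα0]
    · have := hαm (Set.self_mem_Ici) (Set.mem_Ici.mpr hd) h
      rw [hα0] at this; exact this.le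
  have hanti : AntitoneOn (fun s => B (x s)) (Set.Ici 0) := by
    apply antitoneOn_of_deriv_nonpos (convex_Ici 0)
    · intro t ht
      exact ((hg t ht).continuousAt).continuousWithinAt
    · intro t ht
      rw [interior_Ici] at ht
      exact ((hg t (le_of_lt ht)).differentiableAt).differentiableWithinAt
    · intro t ht
      rw [interior_Ici] at ht
      rw [(hg t ht.le).deriv]
      calc fderiv ℝ B (x t) (f (x t)) ≤ -α (Metric.infDist (x t) D) := hdiss _
        _ ≤ 0 := neg_nonpos.mpr (hα_nonneg _)
  intro t ht
  have hBt : B (x t) < 0 := by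
    calc B (x t) ≤ B (x 0) := hanti Set.self_mem_Ici (Set.mem_Ici.mpr ht) ht
      _ < 0 := hBX0 _ hx0
  exact ⟨hBt, fun hD => absurd hBt (not_lt.mpr (hBD _ hD).le)⟩
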